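/- Let G = (B ∪ R, E) be a finite bipartite graph with parts B and R, and let < be a strict total order on E. Suppose that G contains no monotone increasing path with 7 edges whose first vertex lies in B. Then |E| ≤ 28 · (|B| + |R|). -/

import Mathlib

open Finset

private lemma mono_of_adj' {f : ℕ → ℕ} {k : ℕ}
    (h : ∀ i, i + 1 < k → f i < f (i + 1)) :
    ∀ i j, j < k → i < j → f i < f j := by
  intro i j hj hij
  induction j with
  | zero => omega
  | succ j ih =>
    rcases Nat.lt_or_ge i j with h' | h'
    · exact lt_trans (ih (by omega) h') (h j hj)
    · have hij' : i = j := by omega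
      subst hij'
      exact h i hj

private lemma rodl_core {V : Type*} [Fintype V] [DecidableEq V] (w : Sym2 V → ℕ) :
    ∀ (k : ℕ) (E : Finset (Sym2 V)),
      (∀ e ∈ E, ¬ e.IsDiag) →
      (∀ a ∈ E, ∀ b ∈ E, w a = w b → a = b) →
      Nat.choose k 2 * Fintype.card V < E.card →
      ∃ v : ℕ → V,
        (∀ i ≤ k, ∀ j ≤ k, v i = v j → i = j) ∧
        (∀ i < k, s(v i, v (i + 1)) ∈ E) ∧
        (∀ i, i + 1 < k → w s(v i, v (i + 1)) < w s(v (i + 1), v (i + 2))) := by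
  intro k
  induction k with
  | zero =>
    intro E _ _ hcard
    have hpos : 0 < E.card := by simpa using hcard
    obtain ⟨e, he⟩ := Finset.card_pos.mp hpos
    refine ⟨fun _ => (Quot.out e).1, ?_, ?_, ?_⟩
    · intro i hi j hj _; omega
    · intro i hi; omega
    · intro i hi; omega
  | succ k ih =>
    intro E hdiag hwinj hcard
    classical
    rcases Nat.eq_zero_or_pos k with hk0 | hkpos
    · -- k = 0 : need a single edge (path with 1 edge)
      subst hk0
      have hpos : 0 < E.card := by simpa using hcard
      obtain ⟨e, he⟩ := Finset.card_pos.mp hpos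
      have hd := hdiag e he
      revert he hd
      induction e using Sym2.ind with
      | _ x y =>
        intro he hd
        have hxy : x ≠ y := fun h => hd (by rw [h]; exact Sym2.mk_isDiag_iff.mpr rfl)
        refine ⟨fun i => if i = 0 then x else y, ?_, ?_, ?_⟩
        · intro i hi j hj hv
          interval_cases i <;> interval_cases j <;> simp_all
        · intro i hi
          have : i = 0 := by omega
          subst this; simpa using he
        · intro i hi; omega
    · obtain ⟨m, rfl⟩ : ∃ m, k = m + 1 := ⟨k - 1, by omega⟩
      set n := Fintype.card V with hn
      -- count of strictly larger incident edges
      set cnt : V → Sym2 V → ℕ :=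
        fun x e => (E.filter fun g => x ∈ g ∧ w e < w g).card with hcnt
      have key : ∀ x, ∀ a ∈ E, ∀ b ∈ E, x ∈ a → x ∈ b → w a < w b →
          cnt x b < cnt x a := by
        intro x a ha b hb hxa hxb hw
        apply Finset.card_lt_card
        rw [Finset.ssubset_iff_of_subset]
        · exact ⟨b, Finset.mem_filter.mpr ⟨hb, hxb, hw⟩, by
            simp only [Finset.mem_filter]; rintro ⟨-, -, h⟩; exact lt_irrefl _ h⟩
        · intro g hg
          simp only [Finset.mem_filter] at hg ⊢
          exact ⟨hg.1, hg.2.1, lt_trans hw hg.2.2⟩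
      -- top edges at each vertex
      have hT : ∀ x : V,
          (E.filter fun e => x ∈ e ∧ cnt x e < m + 1).card ≤ m + 1 := by
        intro x
        refine le_trans
          (Finset.card_le_card_of_injOn (cnt x) (t := Finset.range (m + 1)) ?_ ?_)
          (le_of_eq (Finset.card_range _))
        · intro e he'
          simp only [Finset.mem_coe, Finset.mem_filter] at he'
          exact Finset.mem_range.mpr he'.2.2
        · intro a ha b hb hab
          simp only [Finset.coe_filter, Set.mem_setOf_eq] at ha hb
          by_contra hne
          have hwne : w a ≠ w b := fun h => hne (hwinj a ha.1 b hb.1 h)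
          rcases lt_or_gt_of_ne hwne with h | h
          · exact absurd hab (Nat.ne_of_gt (key x a ha.1 b hb.1 ha.2.1 hb.2.1 h))
          · exact absurd hab (Nat.ne_of_lt (key x b hb.1 a ha.1 hb.2.1 ha.2.1 h))
      set E' : Finset (Sym2 V) :=
        E.filter (fun e => ∀ x ∈ e, m + 1 ≤ cnt x e) with hE'
      have hE'sub : E' ⊆ E := Finset.filter_subset _ _
      have hrem : E \ E' ⊆
          Finset.univ.biUnion (fun x => E.filter fun e => x ∈ e ∧ cnt x e < m + 1) := by
        intro e he'
        rw [Finset.mem_sdiff] at he'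
        obtain ⟨heE, heE'⟩ := he'
        rw [hE', Finset.mem_filter] at heE'
        push_neg at heE'
        obtain ⟨x, hx, hcx⟩ := heE' heE
        exact Finset.mem_biUnion.mpr
          ⟨x, Finset.mem_univ x, Finset.mem_filter.mpr ⟨heE, hx, by omega⟩⟩
      have hremcard : (E \ E').card ≤ (m + 1) * n := by
        calc (E \ E').card ≤ _ := Finset.card_le_card hrem
          _ ≤ ∑ x : V, (E.filter fun e => x ∈ e ∧ cnt x e < m + 1).card :=
            Finset.card_biUnion_le
          _ ≤ ∑ _x : V, (m + 1) := Finset.sum_le_sum fun x _ => hT x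
          _ = n * (m + 1) := by rw [Finset.sum_const, Finset.card_univ, smul_eq_mul]
          _ = (m + 1) * n := Nat.mul_comm _ _
      have hch : Nat.choose (m + 2) 2 = Nat.choose (m + 1) 2 + (m + 1) := by
        rw [Nat.choose_succ_succ, Nat.choose_one_right]
        norm_num
        omega
      have hcard' : Nat.choose (m + 1) 2 * n < E'.card := by
        have h1 : E'.card ≤ E.card := Finset.card_le_card hE'sub
        have h2 : (E \ E').card = E.card - E'.card := Finset.card_sdiff_of_subset hE'sub
        have h3 : Nat.choose (m + 1 + 1) 2 * n = Nat.choose (m + 1) 2 * n + (m + 1) * n := by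
          rw [show m + 1 + 1 = m + 2 by omega, hch, Nat.add_mul]
        have h4 : Nat.choose (m + 1 + 1) 2 * n < E.card := hcard
        omega
      obtain ⟨v, hvinj, hvedge, hvmono⟩ :=
        ih E' (fun e he => hdiag e (hE'sub he))
          (fun a ha b hb hab => hwinj a (hE'sub ha) b (hE'sub hb) hab) hcard'
      -- extend the path
      set x := v (m + 1) with hx
      set e₀ : Sym2 V := s(v m, v (m + 1)) with he₀
      have he₀E' : e₀ ∈ E' := hvedge m (by omega)
      have he₀E : e₀ ∈ E := hE'sub he₀E'
      have hxe₀ : x ∈ e₀ := by rw [he₀, hx]; exact Sym2.mem_mk_right _ _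
      have hcnt₀ : m + 1 ≤ cnt x e₀ := by
        rw [hE', Finset.mem_filter] at he₀E'
        exact he₀E'.2 x hxe₀
      set A : Finset (Sym2 V) := E.filter (fun g => x ∈ g ∧ w e₀ < w g) with hA
      have hAcard : m + 1 ≤ A.card := hcnt₀
      set oth : Sym2 V → V :=
        fun g => if h : x ∈ g then Sym2.Mem.other' h else x with hothdef
      have hoth : ∀ g ∈ A, s(x, oth g) = g := by
        intro g hg
        rw [hA, Finset.mem_filter] at hg
        rw [hothdef]
        simp only [dif_pos hg.2.1]
        exact Sym2.other_spec' hg.2.1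
      have hothx : ∀ g ∈ A, oth g ≠ x := by
        intro g hg habs
        have h1 := hoth g hg
        rw [habs] at h1
        have : g.IsDiag := by rw [← h1]; exact Sym2.mk_isDiag_iff.mpr rfl
        exact hdiag g (Finset.mem_filter.mp hg).1 this
      have hclaim : ∃ g ∈ A, ∀ j ≤ m + 1, oth g ≠ v j := by
        by_contra hc
        push_neg at hc
        have hmaps : ∀ g ∈ A, oth g ∈ (Finset.range m).image v := by
          intro g hg
          obtain ⟨j, hj, hje⟩ := hc g hg
          have hjm1 : j ≠ m + 1 := by
            intro h; subst h; exact hothx g hg hje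
          have hjm : j ≠ m := by
            intro h; subst h
            have hge : g = e₀ := by
              rw [← hoth g hg, hje, he₀, Sym2.eq_swap]
            have := (Finset.mem_filter.mp hg).2.2
            rw [hge] at this
            exact lt_irrefl _ this
          exact Finset.mem_image.mpr ⟨j, Finset.mem_range.mpr (by omega), hje.symm⟩
        have hle : A.card ≤ ((Finset.range m).image v).card := by
          apply Finset.card_le_card_of_injOn oth hmaps
          intro a ha b hb hab
          rw [← hoth a ha, ← hoth b hb, hab]
        have := Finset.card_image_le (s := Finset.range m) (f := v)
        simp only [Finset.card_range] at this
        omega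
      obtain ⟨g, hgA, hgnew⟩ := hclaim
      obtain ⟨hgE, hxg, hwg⟩ := Finset.mem_filter.mp hgA
      set u := oth g with hu
      have hgu : s(x, u) = g := hoth g hgA
      refine ⟨fun i => if i = m + 2 then u else v i, ?_, ?_, ?_⟩
      · intro i hi j hj hv
        dsimp only at hv
        by_cases h1 : i = m + 2 <;> by_cases h2 : j = m + 2
        · omega
        · exfalso
          rw [if_pos h1, if_neg h2] at hv
          exact hgnew j (by omega) hv
        · exfalso
          rw [if_neg h1, if_pos h2] at hv
          exact hgnew i (by omega) hv.symm
        · rw [if_neg h1, if_neg h2] at hv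
          exact hvinj i (by omega) j (by omega) hv
      · intro i hi
        dsimp only
        by_cases h1 : i = m + 1
        · rw [if_neg (show i ≠ m + 2 by omega), if_pos (show i + 1 = m + 2 by omega)]
          rw [h1, ← hx, hgu]
          exact hgE
        · rw [if_neg (show i ≠ m + 2 by omega), if_neg (show i + 1 ≠ m + 2 by omega)]
          exact hE'sub (hvedge i (by omega))
      · intro i hi
        dsimp only
        by_cases h1 : i = m
        · rw [if_neg (show i ≠ m + 2 by omega), if_neg (show i + 1 ≠ m + 2 by omega),
            if_pos (show i + 2 = m + 2 by omega)]
          have h2 : s(v (i + 1), u) = g := by rw [show i + 1 = m + 1 by omega, ← hx]; exact hgu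
          have h3 : s(v i, v (i + 1)) = e₀ := by rw [h1, he₀]
          rw [h2, h3]
          exact hwg
        · rw [if_neg (show i ≠ m + 2 by omega), if_neg (show i + 1 ≠ m + 2 by omega),
            if_neg (show i + 2 ≠ m + 2 by omega)]
          exact hvmono i (by omega)

/-- Bipartite Rödl bound: if a finite bipartite graph with parts `B` and its
complement, with a strict total order on its edges, contains no monotone
increasing path of `7` edges starting in `B`, then it has at most
`28 * |V|` edges. -/
theorem stmt12 {V : Type*} [Fintype V] [DecidableEq V] (G : SimpleGraph V)
    [DecidableRel G.Adj] (B : Set V)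
    (hbip : ∀ v w : V, G.Adj v w → (v ∈ B ↔ w ∉ B))
    (lt : G.edgeSet → G.edgeSet → Prop)
    (hto : IsTrichotomous G.edgeSet lt) (htr : IsTrans G.edgeSet lt)
    (hir : IsIrrefl G.edgeSet lt)
    (hpath : ¬ ∃ (v : Fin 8 → V) (_ : Function.Injective v) (_ : v 0 ∈ B)
      (hadj : ∀ i : Fin 7, G.Adj (v i.castSucc) (v i.succ)),
      ∀ i j : Fin 7, i < j →
        lt ⟨s(v i.castSucc, v i.succ), G.mem_edgeSet.2 (hadj i)⟩
           ⟨s(v j.castSucc, v j.succ), G.mem_edgeSet.2 (hadj j)⟩) :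
    G.edgeFinset.card ≤ 28 * Fintype.card V := by
  classical
  by_contra hlt
  push_neg at hlt
  set w : Sym2 V → ℕ := fun e =>
    if h : e ∈ G.edgeSet then (Finset.univ.filter fun f => lt f ⟨e, h⟩).card else 0 with hw
  have hwmono : ∀ a b : G.edgeSet, lt a b → w a.1 < w b.1 := by
    intro a b hab
    rw [hw]
    simp only [dif_pos a.2, dif_pos b.2]
    apply Finset.card_lt_card
    rw [Finset.ssubset_iff_of_subset]
    · refine ⟨a, Finset.mem_filter.mpr ⟨Finset.mem_univ _, ?_⟩, ?_⟩
      · exact hab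
      · simp only [Finset.mem_filter]
        rintro ⟨-, h⟩
        exact hir.irrefl a h
    · intro f hf
      simp only [Finset.mem_filter] at hf ⊢
      exact ⟨hf.1, htr.trans _ _ _ hf.2 hab⟩
  have hwlt : ∀ a b : G.edgeSet, w a.1 < w b.1 → lt a b := by
    intro a b hab
    rcases (by have := hto.trichotomous a b; tauto : lt a b ∨ a = b ∨ lt b a) with h | h | h
    · exact h
    · rw [h] at hab; exact absurd hab (lt_irrefl _)
    · exact absurd (hwmono b a h) (by omega)
  have hwinj : ∀ a ∈ G.edgeFinset, ∀ b ∈ G.edgeFinset, w a = w b → a = b := by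
    intro a ha b hb h
    rw [SimpleGraph.mem_edgeFinset] at ha hb
    rcases (by have := hto.trichotomous ⟨a, ha⟩ ⟨b, hb⟩; tauto :
        lt ⟨a, ha⟩ ⟨b, hb⟩ ∨ (⟨a, ha⟩ : G.edgeSet) = ⟨b, hb⟩ ∨ lt ⟨b, hb⟩ ⟨a, ha⟩) with h' | h' | h'
    · have hc : w a < w b := hwmono ⟨a, ha⟩ ⟨b, hb⟩ h'
      omega
    · exact congrArg Subtype.val h'
    · have hc : w b < w a := hwmono ⟨b, hb⟩ ⟨a, ha⟩ h'
      omega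
  have hdiag : ∀ e ∈ G.edgeFinset, ¬ e.IsDiag := by
    intro e he
    exact G.not_isDiag_of_mem_edgeSet (SimpleGraph.mem_edgeFinset.mp he)
  have hcard28 : Nat.choose 8 2 * Fintype.card V < G.edgeFinset.card := by
    have h28 : Nat.choose 8 2 = 28 := by decide
    rw [h28]; exact hlt
  obtain ⟨v, hvinj, hvedge, hvmono⟩ := rodl_core w 8 G.edgeFinset hdiag hwinj hcard28
  have hadjG : ∀ i, i < 8 → G.Adj (v i) (v (i + 1)) := by
    intro i hi
    exact G.mem_edgeSet.mp (SimpleGraph.mem_edgeFinset.mp (hvedge i hi))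
  have hmain : ∀ a b : ℕ, a < b → b < 8 →
      w s(v a, v (a + 1)) < w s(v b, v (b + 1)) := by
    intro a b hab hb
    exact mono_of_adj' (f := fun t => w s(v t, v (t + 1))) hvmono a b hb hab
  have hB : ∃ o : ℕ, o ≤ 1 ∧ v o ∈ B := by
    by_cases h0 : v 0 ∈ B
    · exact ⟨0, by omega, h0⟩
    · refine ⟨1, le_refl 1, ?_⟩
      have hiff := hbip (v 0) (v 1) (hadjG 0 (by omega))
      by_contra h1
      exact h0 (hiff.mpr h1)
  obtain ⟨o, ho, hoB⟩ := hB
  apply hpath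
  refine ⟨fun i => v (o + i.val), ?_, ?_, ?_, ?_⟩
  · intro i j h
    have hi8 := i.isLt
    have hj8 := j.isLt
    dsimp only at h
    have h2 := hvinj (o + i.val) (by omega) (o + j.val) (by omega) h
    exact Fin.ext (by omega)
  · simpa using hoB
  · intro i
    have hi7 := i.isLt
    dsimp only
    simp only [Fin.coe_castSucc, Fin.val_succ]
    rw [← Nat.add_assoc]
    exact hadjG _ (by omega)
  · intro i j hij
    have hi7 := i.isLt
    have hj7 := j.isLt
    have hij' : (i : ℕ) < (j : ℕ) := hij
    apply hwlt
    show w s(v (o + (i.castSucc : Fin 8).val), v (o + (i.succ : Fin 8).val)) <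
      w s(v (o + (j.castSucc : Fin 8).val), v (o + (j.succ : Fin 8).val))
    simp only [Fin.coe_castSucc, Fin.val_succ]
    rw [← Nat.add_assoc, ← Nat.add_assoc]
    exact hmain (o + i.val) (o + j.val) (by omega) (by omega)
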